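/- Let Γ = (V,E) be an (r+1)-antipodal distance-regular graph of even diameter d = 2d̄ with folded graph Γ̄ = (V̄,Ē) of diameter d̄, let V = V⁰ ∪ V¹ ∪ ⋯ ∪ V^r be an (r+1)-antipodal partition of V, and for v ∈ V̄ write v^i for the representative of the class v in V^i. Let R̄ be a resolving set for Γ̄ and set R = { w^ℓ : w ∈ R̄, 1 ≤ ℓ ≤ r }. If there exists u ∈ V̄ such that d_Γ̄(u,w) = d̄ for all w ∈ R̄, then R* = R ∪ {u¹,…,u^r} is a resolving set for Γ. In particular, μ(Γ) ≤ r(μ(Γ̄) + 1). -/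

import Mathlib

open SimpleGraph

/-- `R` is a resolving set for `G`: every pair of distinct vertices is
distinguished by its distances to some vertex of `R`. -/
def IsResolving {V : Type*} (G : SimpleGraph V) (R : Set V) : Prop :=
  ∀ u w : V, u ≠ w → ∃ v ∈ R, G.dist u v ≠ G.dist w v

/-- The metric dimension of `G`: the least size of a resolving set. -/
noncomputable def metricDim {V : Type*} (G : SimpleGraph V) : ℕ :=
  sInf {n | ∃ R : Set V, IsResolving G R ∧ R.ncard = n}

/-- `G` has diameter `d`. -/
def HasDiam {V : Type*} (G : SimpleGraph V) (d : ℕ) : Prop :=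
  (∀ u w : V, G.dist u w ≤ d) ∧ ∃ u w : V, G.dist u w = d

/-- `G` is distance-regular: there are parameters `cᵢ, aᵢ, bᵢ` such that for any
vertices `u, w` at distance `i`, the number of neighbours of `w` at distance
`i-1`, `i`, `i+1` from `u` is `cᵢ`, `aᵢ`, `bᵢ` respectively. -/
def IsDistRegular {V : Type*} (G : SimpleGraph V) : Prop :=
  ∃ c a b : ℕ → ℕ, ∀ (i : ℕ) (u w : V), G.dist u w = i →
    {x | G.Adj w x ∧ G.dist u x = i - 1}.ncard = c i ∧
    {x | G.Adj w x ∧ G.dist u x = i}.ncard = a i ∧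
    {x | G.Adj w x ∧ G.dist u x = i + 1}.ncard = b i

/-- The folded graph of a graph on `Vb × Fin t` whose antipodal classes are the
fibres `{v} × Fin t`: two classes are adjacent iff they contain adjacent vertices. -/
def folded {Vb : Type*} {t : ℕ} (G : SimpleGraph (Vb × Fin t)) : SimpleGraph Vb :=
  SimpleGraph.fromRel (fun u v => ∃ i j : Fin t, G.Adj (u, i) (v, j))



section general
variable {W : Type*} {H : SimpleGraph W}

/-- On a geodesic, the penultimate vertex is a neighbour of the end at distance one less. -/
lemma exists_adj_dist (hc : H.Connected) {u w : W} {k : ℕ}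
    (h : H.dist u w = k + 1) : ∃ z, H.Adj z w ∧ H.dist u z = k := by
  obtain ⟨p, hp⟩ := hc.exists_walk_length_eq_dist w u
  rw [SimpleGraph.dist_comm (u := w), h] at hp
  cases p with
  | nil => simp at hp
  | @cons _ z _ ha q =>
    refine ⟨z, ha.symm, ?_⟩
    have h1 : H.dist u z ≤ k := by
      have := SimpleGraph.dist_le q.reverse
      simpa [Nat.succ_eq_add_one] using (by
        have : q.length = k := by simpa using hp
        simpa [this] using SimpleGraph.dist_le q.reverse)
    have h2 : H.dist z w ≤ 1 := by
      simpa using SimpleGraph.dist_le (Walk.cons ha.symm Walk.nil)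
    have h3 := hc.dist_triangle (u := u) (v := z) (w := w)
    omega

/-- Distances below a realized distance are realized. -/
lemma exists_dist_down (hc : H.Connected) :
    ∀ (k : ℕ) (u w : W), H.dist u w = k → ∀ m, m ≤ k → ∃ w', H.dist u w' = m := by
  intro k
  induction k with
  | zero =>
    intro u w h m hm
    exact ⟨u, by simpa [Nat.le_zero.mp hm] using (SimpleGraph.dist_self (G := H) (v := u))⟩
  | succ k ih =>
    intro u w h m hm
    rcases Nat.eq_or_lt_of_le hm with he | hlt
    · exact ⟨w, by omega⟩
    · obtain ⟨z, _, hz⟩ := exists_adj_dist hc h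
      exact ih u z hz m (by omega)

end general



section core
variable {Vb : Type*} [Fintype Vb] {r db : ℕ} {G : SimpleGraph (Vb × Fin (r + 1))}

lemma adj_fst_ne (hant : ∀ x y : Vb × Fin (r + 1),
      (G.dist x y = 0 ∨ G.dist x y = 2 * db) ↔ x.1 = y.1)
    (hdb : 1 ≤ db) {x y : Vb × Fin (r + 1)} (h : G.Adj x y) : x.1 ≠ y.1 := by
  intro he
  have h1 : G.dist x y = 1 := by simpa using h
  have := (hant x y).mpr he
  omega

lemma adj_folded (hant : ∀ x y : Vb × Fin (r + 1),
      (G.dist x y = 0 ∨ G.dist x y = 2 * db) ↔ x.1 = y.1)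
    (hdb : 1 ≤ db) {x y : Vb × Fin (r + 1)} (h : G.Adj x y) :
    (folded G).Adj x.1 y.1 := by
  refine ⟨adj_fst_ne hant hdb h, Or.inl ⟨x.2, y.2, ?_⟩⟩
  simpa using h

/-- The projection as a graph homomorphism. -/
def projHom (hant : ∀ x y : Vb × Fin (r + 1),
      (G.dist x y = 0 ∨ G.dist x y = 2 * db) ↔ x.1 = y.1)
    (hdb : 1 ≤ db) : G →g folded G :=
  ⟨Prod.fst, fun h => adj_folded hant hdb h⟩

lemma folded_connected (hconn : G.Connected)
    (hant : ∀ x y : Vb × Fin (r + 1),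
      (G.dist x y = 0 ∨ G.dist x y = 2 * db) ↔ x.1 = y.1)
    (hdb : 1 ≤ db) : (folded G).Connected := by
  have hne : Nonempty (Vb × Fin (r + 1)) := hconn.nonempty
  haveI : Nonempty Vb := ⟨(Classical.choice hne).1⟩
  constructor
  intro a b
  obtain ⟨p⟩ := hconn ((a, 0) : Vb × Fin (r + 1)) ((b, 0) : Vb × Fin (r + 1))
  exact ⟨p.map (projHom hant hdb)⟩

lemma fdist_le_dist (hconn : G.Connected)
    (hant : ∀ x y : Vb × Fin (r + 1),
      (G.dist x y = 0 ∨ G.dist x y = 2 * db) ↔ x.1 = y.1)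
    (hdb : 1 ≤ db) (x y : Vb × Fin (r + 1)) :
    (folded G).dist x.1 y.1 ≤ G.dist x y := by
  obtain ⟨p, hp⟩ := hconn.exists_walk_length_eq_dist x y
  have := SimpleGraph.dist_le (p.map (projHom hant hdb))
  simp only [Walk.length_map, hp] at this
  exact this

lemma samefiber_dist (hconn : G.Connected)
    (hant : ∀ x y : Vb × Fin (r + 1),
      (G.dist x y = 0 ∨ G.dist x y = 2 * db) ↔ x.1 = y.1)
    {a : Vb} {i j : Fin (r + 1)} (hij : i ≠ j) :
    G.dist (a, i) (a, j) = 2 * db := by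
  have := (hant (a, i) (a, j)).mpr rfl
  rcases this with h | h
  · exact absurd (by simpa using hconn.dist_eq_zero_iff.mp h) hij
  · exact h

end core
section core2
variable {Vb : Type*} [Fintype Vb] {r db : ℕ} {G : SimpleGraph (Vb × Fin (r + 1))}

lemma fin_one_ne_zero (hr : 1 ≤ r) : (1 : Fin (r + 1)) ≠ 0 := by
  intro h
  have := congrArg Fin.val h
  rw [Fin.val_one'] at this
  rw [Nat.mod_eq_of_lt (by omega)] at this
  simp at this

lemma exists_pair_dist (hconn : G.Connected) (hdiam : HasDiam G (2 * db))
    (hant : ∀ x y : Vb × Fin (r + 1),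
      (G.dist x y = 0 ∨ G.dist x y = 2 * db) ↔ x.1 = y.1)
    (hr : 1 ≤ r) {m : ℕ} (hm : m ≤ 2 * db) :
    ∃ u w : Vb × Fin (r + 1), G.dist u w = m := by
  have hne : Nonempty (Vb × Fin (r + 1)) := hconn.nonempty
  obtain ⟨a, _⟩ := Classical.choice hne
  have h2 : G.dist (a, 0) (a, (1 : Fin (r + 1))) = 2 * db :=
    samefiber_dist hconn hant (fin_one_ne_zero hr).symm
  obtain ⟨w', hw'⟩ := exists_dist_down hconn (2 * db) (a, 0) (a, 1) h2 m hm
  exact ⟨(a, 0), w', hw'⟩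

lemma step_away (hconn : G.Connected) (hdr : IsDistRegular G)
    (hdiam : HasDiam G (2 * db))
    (hant : ∀ x y : Vb × Fin (r + 1),
      (G.dist x y = 0 ∨ G.dist x y = 2 * db) ↔ x.1 = y.1)
    (hr : 1 ≤ r) {z x : Vb × Fin (r + 1)} {m : ℕ}
    (h : G.dist z x = m) (hm : m < 2 * db) :
    ∃ x', G.Adj x x' ∧ G.dist z x' = m + 1 := by
  obtain ⟨c, A, B, hcab⟩ := hdr
  -- a configuration at distance m with an extension
  obtain ⟨u₀, y₀, hy₀⟩ := exists_pair_dist hconn hdiam hant hr (show m + 1 ≤ 2 * db by omega)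
  obtain ⟨w₀, haw, hw₀⟩ := exists_adj_dist hconn hy₀
  have hB := (hcab m u₀ w₀ hw₀).2.2
  have hmem : y₀ ∈ {v | G.Adj w₀ v ∧ G.dist u₀ v = m + 1} := ⟨haw, hy₀⟩
  have hBpos : B m ≠ 0 := by
    intro h0
    rw [h0, Set.ncard_eq_zero (Set.toFinite _)] at hB
    rw [hB] at hmem
    exact hmem
  have hx := (hcab m z x h).2.2
  have : {v | G.Adj x v ∧ G.dist z v = m + 1}.Nonempty := by
    rw [← Set.ncard_pos (Set.toFinite _)]
    omega
  obtain ⟨x', hx1, hx2⟩ := this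
  exact ⟨x', hx1, hx2⟩

lemma away (hconn : G.Connected) (hdr : IsDistRegular G)
    (hdiam : HasDiam G (2 * db))
    (hant : ∀ x y : Vb × Fin (r + 1),
      (G.dist x y = 0 ∨ G.dist x y = 2 * db) ↔ x.1 = y.1)
    (hdb : 1 ≤ db) (hr : 1 ≤ r) :
    ∀ (n : ℕ) (x z : Vb × Fin (r + 1)), G.dist z x + n = 2 * db →
      (folded G).dist z.1 x.1 ≤ n := by
  intro n
  induction n with
  | zero =>
    intro x z h
    have : z.1 = x.1 := (hant z x).mp (Or.inr (by omega))
    rw [this]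
    simp [SimpleGraph.dist_self]
  | succ n ih =>
    intro x z h
    obtain ⟨x', hadj, hx'⟩ := step_away hconn hdr hdiam hant hr (m := G.dist z x) rfl (by omega)
    have h1 : (folded G).dist z.1 x'.1 ≤ n := ih x' z (by omega)
    have h2 : (folded G).dist x'.1 x.1 ≤ 1 := by
      have := SimpleGraph.dist_le (Walk.cons ((adj_folded hant hdb hadj).symm) Walk.nil)
      simpa using this
    have h3 := (folded_connected hconn hant hdb).dist_triangle
      (u := z.1) (v := x'.1) (w := x.1)
    omega

lemma dist_bounds (hconn : G.Connected) (hdr : IsDistRegular G)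
    (hdiam : HasDiam G (2 * db))
    (hant : ∀ x y : Vb × Fin (r + 1),
      (G.dist x y = 0 ∨ G.dist x y = 2 * db) ↔ x.1 = y.1)
    (hdb : 1 ≤ db) (hr : 1 ≤ r) (x y : Vb × Fin (r + 1)) :
    (folded G).dist x.1 y.1 ≤ G.dist x y ∧
      G.dist x y + (folded G).dist x.1 y.1 ≤ 2 * db := by
  refine ⟨fdist_le_dist hconn hant hdb x y, ?_⟩
  have hle : G.dist x y ≤ 2 * db := hdiam.1 x y
  have := away hconn hdr hdiam hant hdb hr (2 * db - G.dist x y) y x (by omega)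
  omega

end core2

section core3
variable {Vb : Type*} [Fintype Vb] {r db : ℕ} {G : SimpleGraph (Vb × Fin (r + 1))}

lemma covering (hconn : G.Connected) (hdr : IsDistRegular G)
    (hdiam : HasDiam G (2 * db))
    (hant : ∀ x y : Vb × Fin (r + 1),
      (G.dist x y = 0 ∨ G.dist x y = 2 * db) ↔ x.1 = y.1)
    (hdb : 1 ≤ db) (hr : 1 ≤ r) {b' b : Vb} (hadj : (folded G).Adj b' b)
    (j' : Fin (r + 1)) : ∃ jb, G.Adj (b', j') (b, jb) := by
  obtain ⟨hne, hex⟩ := hadj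
  have hex' : ∃ i0 j0 : Fin (r + 1), G.Adj (b', i0) (b, j0) := by
    rcases hex with ⟨i0, j0, h⟩ | ⟨i0, j0, h⟩
    · exact ⟨i0, j0, h⟩
    · exact ⟨j0, i0, h.symm⟩
  obtain ⟨i0, j0, h0⟩ := hex'
  by_cases hji : j' = i0
  · exact ⟨j0, by rw [hji]; exact h0⟩
  · have hd1 : G.dist (b', i0) (b, j0) ≤ 1 := by
      simpa using SimpleGraph.dist_le (Walk.cons h0 Walk.nil)
    have h2db : G.dist (b', i0) (b', j') = 2 * db := samefiber_dist hconn hant (fun h => hji h.symm)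
    have htri := hconn.dist_triangle (u := (b', i0)) (v := (b, j0)) (w := (b', j'))
    have hne2 : G.dist (b, j0) (b', j') ≠ 2 * db := by
      intro h
      exact hne (((hant (b, j0) (b', j')).mp (Or.inr h)).symm)
    have hle : G.dist (b, j0) (b', j') ≤ 2 * db := hdiam.1 _ _
    have hm : G.dist (b, j0) (b', j') = 2 * db - 1 := by omega
    obtain ⟨x', hx1, hx2⟩ := step_away hconn hdr hdiam hant hr hm (by omega)
    have : 2 * db - 1 + 1 = 2 * db := by omega
    rw [this] at hx2
    have hxb : x'.1 = b := ((hant (b, j0) x').mp (Or.inr hx2)).symm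
    refine ⟨x'.2, ?_⟩
    have : x' = (b, x'.2) := by rw [← hxb]
    rw [← this]
    exact hx1

lemma lift_walk (hconn : G.Connected) (hdr : IsDistRegular G)
    (hdiam : HasDiam G (2 * db))
    (hant : ∀ x y : Vb × Fin (r + 1),
      (G.dist x y = 0 ∨ G.dist x y = 2 * db) ↔ x.1 = y.1)
    (hdb : 1 ≤ db) (hr : 1 ≤ r) {a b : Vb} (p : (folded G).Walk a b) :
    ∀ i : Fin (r + 1), ∃ j, G.dist (a, i) (b, j) ≤ p.length := by
  induction p with
  | nil =>
    intro i
    exact ⟨i, by simp [SimpleGraph.dist_self]⟩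
  | @cons a b'' b h q ih =>
    intro i
    obtain ⟨j'', hj''⟩ := covering hconn hdr hdiam hant hdb hr h i
    obtain ⟨j, hj⟩ := ih j''
    refine ⟨j, ?_⟩
    have h1 : G.dist (a, i) (b'', j'') ≤ 1 := by
      simpa using SimpleGraph.dist_le (Walk.cons hj'' Walk.nil)
    have htri := hconn.dist_triangle (u := (a, i)) (v := (b'', j'')) (w := (b, j))
    simp only [Walk.length_cons]
    omega

lemma min_attained (hconn : G.Connected) (hdr : IsDistRegular G)
    (hdiam : HasDiam G (2 * db))
    (hant : ∀ x y : Vb × Fin (r + 1),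
      (G.dist x y = 0 ∨ G.dist x y = 2 * db) ↔ x.1 = y.1)
    (hdb : 1 ≤ db) (hr : 1 ≤ r) (a : Vb) (i : Fin (r + 1)) (b : Vb) :
    ∃ j, G.dist (a, i) (b, j) = (folded G).dist a b := by
  obtain ⟨p, hp⟩ := (folded_connected hconn hant hdb).exists_walk_length_eq_dist a b
  obtain ⟨j, hj⟩ := lift_walk hconn hdr hdiam hant hdb hr p i
  rw [hp] at hj
  refine ⟨j, le_antisymm hj ?_⟩
  exact fdist_le_dist hconn hant hdb (a, i) (b, j)

lemma two_valued (hconn : G.Connected) (hdr : IsDistRegular G)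
    (hdiam : HasDiam G (2 * db))
    (hant : ∀ x y : Vb × Fin (r + 1),
      (G.dist x y = 0 ∨ G.dist x y = 2 * db) ↔ x.1 = y.1)
    (hdb : 1 ≤ db) (hr : 1 ≤ r) (a : Vb) (i : Fin (r + 1)) (b : Vb) (j : Fin (r + 1)) :
    G.dist (a, i) (b, j) = (folded G).dist a b ∨
      G.dist (a, i) (b, j) = 2 * db - (folded G).dist a b := by
  have hb := dist_bounds hconn hdr hdiam hant hdb hr (a, i) (b, j)
  set δ := (folded G).dist a b with hδ
  set m := G.dist (a, i) (b, j) with hm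
  rcases Nat.eq_or_lt_of_le hb.1 with he | hlt
  · exact Or.inl he.symm
  · obtain ⟨j0, hj0⟩ := min_attained hconn hdr hdiam hant hdb hr a i b
    have hjne : j0 ≠ j := by
      intro h
      rw [h] at hj0
      omega
    have h2db : G.dist (b, j0) (b, j) = 2 * db := samefiber_dist hconn hant hjne
    have htri := hconn.dist_triangle (u := (b, j0)) (v := (a, i)) (w := (b, j))
    have hcm : G.dist (b, j0) (a, i) = G.dist (a, i) (b, j0) := SimpleGraph.dist_comm
    right
    omega

end core3

section main
variable {Vb : Type*} [Fintype Vb] {r db : ℕ} {G : SimpleGraph (Vb × Fin (r + 1))}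

lemma mainU (hconn : G.Connected) (hdr : IsDistRegular G)
    (hdiam : HasDiam G (2 * db))
    (hant : ∀ x y : Vb × Fin (r + 1),
      (G.dist x y = 0 ∨ G.dist x y = 2 * db) ↔ x.1 = y.1)
    (hfdiam : HasDiam (folded G) db)
    (hdb : 1 ≤ db) (hr : 1 ≤ r) (T Rb' : Set Vb) (hsub : Rb' ⊆ T)
    (hres : IsResolving (folded G) Rb')
    (hT : ∀ a : Vb, ∃ w ∈ T, (folded G).dist a w < db) :
    IsResolving G {p : Vb × Fin (r + 1) | p.1 ∈ T ∧ p.2 ≠ 0} := by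
  rintro ⟨a, i⟩ ⟨b, j⟩ hxy
  by_cases hab : a = b
  · subst hab
    have hij : i ≠ j := fun h => hxy (by rw [h])
    have hdxy : G.dist (a, i) (a, j) = 2 * db := samefiber_dist hconn hant hij
    obtain ⟨w, hwT, hwlt⟩ := hT a
    obtain ⟨jx, hjx⟩ := min_attained hconn hdr hdiam hant hdb hr a i w
    obtain ⟨jy, hjy⟩ := min_attained hconn hdr hdiam hant hdb hr a j w
    have hnexy : jx ≠ jy := by
      intro h
      subst h
      have htri := hconn.dist_triangle (u := (a, i)) (v := (w, jx)) (w := (a, j))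
      have hcm : G.dist (w, jx) (a, j) = G.dist (a, j) (w, jx) := SimpleGraph.dist_comm
      omega
    by_cases h0 : jx = 0
    · refine ⟨(w, jy), ⟨hwT, fun h => hnexy (h0.trans h.symm)⟩, ?_⟩
      have h2 := two_valued hconn hdr hdiam hant hdb hr a i w jy
      have hnot : G.dist (a, i) (w, jy) ≠ (folded G).dist a w := by
        intro h
        have h2db : G.dist (w, jx) (w, jy) = 2 * db := samefiber_dist hconn hant hnexy
        have htri := hconn.dist_triangle (u := (w, jx)) (v := (a, i)) (w := (w, jy))
        have hcm : G.dist (w, jx) (a, i) = G.dist (a, i) (w, jx) := SimpleGraph.dist_comm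
        omega
      rcases h2 with h2 | h2
      · exact absurd h2 hnot
      · rw [h2, hjy]; omega
    · refine ⟨(w, jx), ⟨hwT, h0⟩, ?_⟩
      have h2 := two_valued hconn hdr hdiam hant hdb hr a j w jx
      have hnot : G.dist (a, j) (w, jx) ≠ (folded G).dist a w := by
        intro h
        have h2db : G.dist (w, jy) (w, jx) = 2 * db := samefiber_dist hconn hant (Ne.symm hnexy)
        have htri := hconn.dist_triangle (u := (w, jy)) (v := (a, j)) (w := (w, jx))
        have hcm : G.dist (w, jy) (a, j) = G.dist (a, j) (w, jy) := SimpleGraph.dist_comm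
        omega
      rcases h2 with h2 | h2
      · exact absurd h2 hnot
      · rw [h2, hjx]; omega
  · obtain ⟨w, hwRb, hww⟩ := hres a b hab
    refine ⟨(w, 1), ⟨hsub hwRb, fin_one_ne_zero hr⟩, ?_⟩
    have h1 := two_valued hconn hdr hdiam hant hdb hr a i w 1
    have h2 := two_valued hconn hdr hdiam hant hdb hr b j w 1
    have hda := hfdiam.1 a w
    have hdb' := hfdiam.1 b w
    omega

lemma ncard_fiber_set (T : Set Vb) :
    ({p : Vb × Fin (r + 1) | p.1 ∈ T ∧ p.2 ≠ 0}).ncard = T.ncard * r := by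
  classical
  have hseq : {p : Vb × Fin (r + 1) | p.1 ∈ T ∧ p.2 ≠ 0}
      = T ×ˢ {ℓ : Fin (r + 1) | ℓ ≠ 0} := by
    ext p
    simp [Set.mem_prod]
  rw [hseq]
  rw [show (T ×ˢ {ℓ : Fin (r + 1) | ℓ ≠ 0}).ncard
        = Nat.card (T ×ˢ {ℓ : Fin (r + 1) | ℓ ≠ 0} : Set (Vb × Fin (r + 1)))
      from (Nat.card_coe_set_eq _).symm,
    Nat.card_congr (Equiv.Set.prod _ _), Nat.card_prod,
    Nat.card_coe_set_eq, Nat.card_coe_set_eq]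
  congr 1
  rw [Set.ncard_eq_toFinset_card', Set.toFinset_setOf, Finset.filter_ne',
    Finset.card_erase_of_mem (Finset.mem_univ _)]
  simp

end main

/-- Let `G` be an `(r+1)`-antipodal distance-regular graph of even
diameter `d = 2d̄`, presented on `Vb × Fin (r+1)` so that the antipodal classes are the
fibres `{v} × Fin (r+1)`, with folded graph of diameter `d̄`.  Let `R̄` be a resolving
set for the folded graph and `R = {(w, ℓ) : w ∈ R̄, ℓ ≠ 0}`.  If some `u ∈ V̄` satisfies
`d̄(u,w) = d̄` for all `w ∈ R̄`, then `R ∪ {(u, ℓ) : ℓ ≠ 0}` is a resolving set for `G`;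
in particular `μ(G) ≤ r (μ(Ḡ) + 1)`. -/
theorem stmt6 {Vb : Type*} [Fintype Vb] (r db : ℕ)
    (G : SimpleGraph (Vb × Fin (r + 1)))
    (hconn : G.Connected) (hdr : IsDistRegular G) (hdiam : HasDiam G (2 * db))
    (hant : ∀ x y : Vb × Fin (r + 1),
      (G.dist x y = 0 ∨ G.dist x y = 2 * db) ↔ x.1 = y.1)
    (hfdiam : HasDiam (folded G) db)
    (Rb : Set Vb) (hRb : IsResolving (folded G) Rb)
    (u : Vb) (hu : ∀ w ∈ Rb, (folded G).dist u w = db) :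
    IsResolving G
      ({p : Vb × Fin (r + 1) | p.1 ∈ Rb ∧ p.2 ≠ 0} ∪
        {p : Vb × Fin (r + 1) | p.1 = u ∧ p.2 ≠ 0}) ∧
      metricDim G ≤ r * (metricDim (folded G) + 1) := by
  rcases Nat.eq_zero_or_pos db with hdb0 | hdb
  · subst hdb0
    have hsing : ∀ p q : Vb × Fin (r + 1), p = q := by
      intro p q
      have := hdiam.1 p q
      exact hconn.dist_eq_zero_iff.mp (by omega)
    constructor
    · intro p q hpq
      exact absurd (hsing p q) hpq
    · have h0 : metricDim G ≤ 0 :=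
        Nat.sInf_le ⟨∅, fun p q hpq => absurd (hsing p q) hpq, Set.ncard_empty _⟩
      omega
  rcases Nat.eq_zero_or_pos r with hr0 | hr
  · exfalso
    obtain ⟨p, q, hpq⟩ := hdiam.2
    have h1 : p.1 = q.1 := (hant p q).mp (Or.inr hpq)
    have h2 : p.2 = q.2 := by
      have ha := p.2.isLt
      have hb := q.2.isLt
      exact Fin.ext (by omega)
    have hpq' : p = q := Prod.ext h1 h2
    rw [hpq', SimpleGraph.dist_self] at hpq
    omega
  constructor
  · have hTc : ∀ a : Vb, ∃ w ∈ Rb ∪ {u}, (folded G).dist a w < db := by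
      intro a
      by_cases h : (folded G).dist a u < db
      · exact ⟨u, Or.inr rfl, h⟩
      · have hdu : (folded G).dist a u = db := le_antisymm (hfdiam.1 a u) (by omega)
        have hau : a ≠ u := by
          intro he
          rw [he, SimpleGraph.dist_self] at hdu
          omega
        obtain ⟨w, hw, hne⟩ := hRb a u hau
        have hw1 := hu w hw
        have hw2 := hfdiam.1 a w
        exact ⟨w, Or.inl hw, by omega⟩
    have hres := mainU hconn hdr hdiam hant hfdiam hdb hr (Rb ∪ {u}) Rb
      Set.subset_union_left hRb hTc
    have hseteq : {p : Vb × Fin (r + 1) | p.1 ∈ Rb ∪ {u} ∧ p.2 ≠ 0} =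
        ({p : Vb × Fin (r + 1) | p.1 ∈ Rb ∧ p.2 ≠ 0} ∪
          {p : Vb × Fin (r + 1) | p.1 = u ∧ p.2 ≠ 0}) := by
      ext p
      simp only [Set.mem_setOf_eq, Set.mem_union, Set.mem_singleton_iff]
      tauto
    rwa [hseteq] at hres
  · classical
    have hfc := folded_connected hconn hant hdb
    have huniv : IsResolving (folded G) Set.univ := by
      intro a b hab
      refine ⟨a, Set.mem_univ a, ?_⟩
      rw [SimpleGraph.dist_self]
      intro h
      exact hab (hfc.dist_eq_zero_iff.mp h.symm).symm
    have hnonempty : {n | ∃ R : Set Vb, IsResolving (folded G) R ∧ R.ncard = n}.Nonempty :=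
      ⟨Set.univ.ncard, Set.univ, huniv, rfl⟩
    have hmem : metricDim (folded G) ∈
        {n | ∃ R : Set Vb, IsResolving (folded G) R ∧ R.ncard = n} := Nat.sInf_mem hnonempty
    obtain ⟨Rm, hRm, hRmcard⟩ := hmem
    obtain ⟨T, hsub, hTc, hcard⟩ :
        ∃ T : Set Vb, Rm ⊆ T ∧ (∀ a : Vb, ∃ w ∈ T, (folded G).dist a w < db) ∧
          T.ncard ≤ metricDim (folded G) + 1 := by
      by_cases hA : ∃ a0 : Vb, ∀ w ∈ Rm, (folded G).dist a0 w = db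
      · obtain ⟨a0, ha0⟩ := hA
        refine ⟨insert a0 Rm, Set.subset_insert _ _, ?_, ?_⟩
        · intro a
          by_cases hall : ∀ w ∈ Rm, (folded G).dist a w = db
          · by_cases haa : a = a0
            · refine ⟨a0, Set.mem_insert _ _, ?_⟩
              rw [haa, SimpleGraph.dist_self]
              omega
            · obtain ⟨w, hw, hne⟩ := hRm a a0 haa
              exact absurd ((hall w hw).trans (ha0 w hw).symm) hne
          · push_neg at hall
            obtain ⟨w, hw, hne⟩ := hall
            exact ⟨w, Set.mem_insert_of_mem _ hw, lt_of_le_of_ne (hfdiam.1 a w) hne⟩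
        · have := Set.ncard_insert_le a0 Rm
          omega
      · push_neg at hA
        refine ⟨Rm, subset_rfl, ?_, by omega⟩
        intro a
        obtain ⟨w, hw, hne⟩ := hA a
        exact ⟨w, hw, lt_of_le_of_ne (hfdiam.1 a w) hne⟩
    have hres := mainU hconn hdr hdiam hant hfdiam hdb hr T Rm hsub hRm hTc
    have hle : metricDim G ≤ ({p : Vb × Fin (r + 1) | p.1 ∈ T ∧ p.2 ≠ 0}).ncard :=
      Nat.sInf_le ⟨{p : Vb × Fin (r + 1) | p.1 ∈ T ∧ p.2 ≠ 0}, hres, rfl⟩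
    rw [ncard_fiber_set] at hle
    calc metricDim G ≤ T.ncard * r := hle
      _ ≤ (metricDim (folded G) + 1) * r := Nat.mul_le_mul_right r hcard
      _ = r * (metricDim (folded G) + 1) := Nat.mul_comm _ _
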